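/- Let m_k = \sum_{j=1}^{n_x} x_j^k - \sum_{j=1}^{n_y} y_j^k for k = 1,...,K+1 where K = n_x + n_y, let a_k be the exponential transform (a_0=1, k a_k = \sum_{j=1}^k m_j a_{k-j}), and let c = (1, c_1, ..., c_{n_x}) be the coefficient vector of p(z) = \prod_j (1 - x_j z). Then a_{K+1} = -\sum_{j=1}^{n_x} c_j a_{K+1-j}, and consequently m_{K+1} = -(K+1)\sum_{j=1}^{n_x} c_j a_{K+1-j} - \sum_{j=1}^{K} m_j a_{K+1-j}. -/

import Mathlib

open Finset Polynomial


lemma tri_swap (k : ℕ) (f : ℕ → ℕ → ℝ) :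
    ∑ j ∈ range (k+1), ∑ i ∈ range j, f i j
      = ∑ i ∈ range k, ∑ t ∈ range (k - i), f i (i + 1 + t) := by
  rw [Finset.sum_sigma', Finset.sum_sigma']
  apply Finset.sum_nbij' (fun p => ⟨p.2, p.1 - p.2 - 1⟩) (fun p => ⟨p.1 + 1 + p.2, p.1⟩)
  · rintro ⟨j, i⟩ hp
    simp only [Finset.mem_sigma, Finset.mem_range] at *
    omega
  · rintro ⟨i, t⟩ hp
    simp only [Finset.mem_sigma, Finset.mem_range] at *
    omega
  · rintro ⟨j, i⟩ hp
    simp only [Finset.mem_sigma, Finset.mem_range] at hp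
    have h : i + 1 + (j - i - 1) = j := by omega
    simp [h]
  · rintro ⟨i, t⟩ hp
    simp only [Finset.mem_sigma, Finset.mem_range] at hp
    have h : i + 1 + t - i - 1 = t := by omega
    simp [h]
  · rintro ⟨j, i⟩ hp
    simp only [Finset.mem_sigma, Finset.mem_range] at hp
    have h : i + 1 + (j - i - 1) = j := by omega
    simp [h]

lemma tri_symm (n : ℕ) (f : ℕ → ℕ → ℝ) :
    ∑ j ∈ range n, ∑ t ∈ range (n - j), f j t
      = ∑ t ∈ range n, ∑ j ∈ range (n - t), f j t := by
  rw [Finset.sum_sigma', Finset.sum_sigma']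
  apply Finset.sum_nbij' (fun p => ⟨p.2, p.1⟩) (fun p => ⟨p.2, p.1⟩)
  · rintro ⟨j, t⟩ hp; simp only [Finset.mem_sigma, Finset.mem_range] at *; omega
  · rintro ⟨t, j⟩ hp; simp only [Finset.mem_sigma, Finset.mem_range] at *; omega
  · rintro ⟨j, t⟩ hp; rfl
  · rintro ⟨t, j⟩ hp; rfl
  · rintro ⟨j, t⟩ hp; rfl


lemma newton {ι : Type*} (s : Finset ι) (x : ι → ℝ) :
    ∀ k : ℕ, (k : ℝ) * (∏ i ∈ s, (1 - C (x i) * X) : ℝ[X]).coeff k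
      = -∑ j ∈ range k, (∑ i ∈ s, x i ^ (j+1)) *
          (∏ i ∈ s, (1 - C (x i) * X) : ℝ[X]).coeff (k - 1 - j) := by
  induction s using Finset.cons_induction with
  | empty =>
      intro k
      rcases k with _ | k <;> simp [Polynomial.coeff_one]
  | cons a s ha ih =>
      intro k
      set c : ℝ := x a with hcdef
      set P : ℝ[X] := ∏ i ∈ s, (1 - C (x i) * X) with hP
      have hprod : (∏ i ∈ Finset.cons a s ha, (1 - C (x i) * X) : ℝ[X])
          = (1 - C c * X) * P := by rw [Finset.prod_cons]
      have hcoeff : ∀ t : ℕ, ((1 - C c * X) * P).coeff t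
          = P.coeff t - c * (X * P).coeff t := by
        intro t
        rw [sub_mul, one_mul, Polynomial.coeff_sub, mul_assoc,
          Polynomial.coeff_C_mul]
      have hq0 : (X * P).coeff 0 = 0 := by simp [Polynomial.mul_coeff_zero]
      have hqs : ∀ t : ℕ, (X * P).coeff (t+1) = P.coeff t := by
        intro t; exact Polynomial.coeff_X_mul P t
      have hsum : ∀ j : ℕ, (∑ i ∈ Finset.cons a s ha, x i ^ (j+1))
          = c ^ (j+1) + ∑ i ∈ s, x i ^ (j+1) := by
        intro j; simp [Finset.sum_cons, hcdef]
      rw [hprod]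
      rcases k with _ | K
      · simp
      · -- k = K + 1
        -- expand RHS sum
        have expand : ∀ j ∈ range (K+1),
            (∑ i ∈ Finset.cons a s ha, x i ^ (j+1)) *
              ((1 - C c * X) * P).coeff (K + 1 - 1 - j)
            = (c ^ (j+1) + ∑ i ∈ s, x i ^ (j+1)) *
              (P.coeff (K - j) - c * (X * P).coeff (K - j)) := by
          intro j hj
          rw [hsum, hcoeff]
          norm_num
        rw [Finset.sum_congr rfl expand, hcoeff]
        -- abbreviations
        set S : ℕ → ℝ := fun j => ∑ i ∈ s, x i ^ (j+1) with hS
        -- key identities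
        have IH1 : ((K + 1 : ℕ) : ℝ) * P.coeff (K+1)
            = -∑ j ∈ range (K+1), S j * P.coeff (K - j) := by
          have := ih (K+1)
          simpa using this
        have IH2 : (K : ℝ) * P.coeff K
            = -∑ j ∈ range K, S j * P.coeff (K - 1 - j) := by
          simpa using ih K
        -- rewrite (X*P).coeff (K-j) terms
        have hqsplit : ∀ j ∈ range (K+1), (c ^ (j+1) + S j) *
              (P.coeff (K - j) - c * (X * P).coeff (K - j))
            = c ^ (j+1) * P.coeff (K-j) + S j * P.coeff (K-j)
              - c * (c ^ (j+1) * (X*P).coeff (K-j)) - c * (S j * (X*P).coeff (K-j)) := by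
          intro j hj; ring
        rw [Finset.sum_congr rfl hqsplit]
        have hsplit : ∑ j ∈ range (K+1),
            (c ^ (j+1) * P.coeff (K-j) + S j * P.coeff (K-j)
              - c * (c ^ (j+1) * (X*P).coeff (K-j)) - c * (S j * (X*P).coeff (K-j)))
            = (∑ j ∈ range (K+1), c ^ (j+1) * P.coeff (K-j))
              + (∑ j ∈ range (K+1), S j * P.coeff (K-j))
              - c * (∑ j ∈ range (K+1), c ^ (j+1) * (X*P).coeff (K-j))
              - c * (∑ j ∈ range (K+1), S j * (X*P).coeff (K-j)) := by
          simp only [Finset.sum_sub_distrib, Finset.sum_add_distrib, ← Finset.mul_sum]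
        rw [hsplit]
        -- identity for the q-sums: last term vanishes, rest shifts
        have hq1 : ∑ j ∈ range (K+1), S j * (X*P).coeff (K - j)
            = ∑ j ∈ range K, S j * P.coeff (K - 1 - j) := by
          rw [Finset.sum_range_succ]
          simp only [Nat.sub_self, hq0, mul_zero, add_zero]
          apply Finset.sum_congr rfl
          intro j hj
          simp only [Finset.mem_range] at hj
          have h : K - j = (K - 1 - j) + 1 := by omega
          rw [h, hqs]
        have hq2 : ∑ j ∈ range (K+1), c ^ (j+1) * (X*P).coeff (K - j)
            = ∑ j ∈ range K, c ^ (j+1) * P.coeff (K - 1 - j) := by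
          rw [Finset.sum_range_succ]
          simp only [Nat.sub_self, hq0, mul_zero, add_zero]
          apply Finset.sum_congr rfl
          intro j hj
          simp only [Finset.mem_range] at hj
          have h : K - j = (K - 1 - j) + 1 := by omega
          rw [h, hqs]
        -- telescoping: T = c * P.coeff K + c * (shifted)
        have htel : ∑ j ∈ range (K+1), c ^ (j+1) * P.coeff (K-j)
            = c * P.coeff K + c * ∑ j ∈ range K, c ^ (j+1) * P.coeff (K - 1 - j) := by
          rw [Finset.sum_range_succ' (fun j => c ^ (j+1) * P.coeff (K-j)) K]
          rw [Finset.mul_sum]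
          rw [add_comm]
          congr 1
          · simp
          · apply Finset.sum_congr rfl
            intro j hj
            simp only [Finset.mem_range] at hj
            have h : K - (j+1) = K - 1 - j := by omega
            rw [h]; ring
        rw [hq1, hq2, htel]
        have hK1 : (X * P).coeff (K+1) = P.coeff K := hqs K
        rw [hK1]
        push_cast at IH1 IH2 ⊢
        linear_combination IH1 - c * IH2

theorem stmt_18 (nx ny : ℕ) (K : ℕ) (hK : K = nx + ny)
    (x : Fin nx → ℝ) (y : Fin ny → ℝ) (m a : ℕ → ℝ)
    (hm : ∀ k : ℕ, 1 ≤ k → k ≤ K + 1 → m k = ∑ j, x j ^ k - ∑ i, y i ^ k)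
    (ha0 : a 0 = 1)
    (harec : ∀ k : ℕ, 1 ≤ k → k ≤ K + 1 →
      (k : ℝ) * a k = ∑ j ∈ Icc 1 k, m j * a (k - j))
    (c : ℕ → ℝ)
    (hc : ∀ j : ℕ, c j = (∏ i, (1 - C (x i) * X) : ℝ[X]).coeff j) :
    a (K + 1) = -∑ j ∈ Icc 1 nx, c j * a (K + 1 - j) ∧
      m (K + 1) = -((K : ℝ) + 1) * ∑ j ∈ Icc 1 nx, c j * a (K + 1 - j) -
        ∑ j ∈ Icc 1 K, m j * a (K + 1 - j) := by
  set P : ℝ[X] := ∏ i, (1 - C (x i) * X) with hP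
  set Q : ℝ[X] := ∏ i, (1 - C (y i) * X) with hQ
  have hdeg1 : ∀ c : ℝ, (1 - C c * X : ℝ[X]).natDegree ≤ 1 := by
    intro c
    refine le_trans (Polynomial.natDegree_sub_le _ _) ?_
    simp only [Polynomial.natDegree_one, max_le_iff]
    exact ⟨Nat.zero_le 1, le_trans (Polynomial.natDegree_C_mul_le _ _) (by simp)⟩
  have hPnd : P.natDegree ≤ nx := by
    refine le_trans (Polynomial.natDegree_prod_le _ _) ?_
    calc ∑ i : Fin nx, (1 - C (x i) * X : ℝ[X]).natDegree
        ≤ ∑ _i : Fin nx, 1 := Finset.sum_le_sum (fun i _ => hdeg1 (x i))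
      _ = nx := by simp
  have hQnd : Q.natDegree ≤ ny := by
    refine le_trans (Polynomial.natDegree_prod_le _ _) ?_
    calc ∑ i : Fin ny, (1 - C (y i) * X : ℝ[X]).natDegree
        ≤ ∑ _i : Fin ny, 1 := Finset.sum_le_sum (fun i _ => hdeg1 (y i))
      _ = ny := by simp
  have hP0 : P.coeff 0 = 1 := by
    rw [hP, Polynomial.coeff_zero_eq_eval_zero, Polynomial.eval_prod]
    simp
  have hQ0 : Q.coeff 0 = 1 := by
    rw [hQ, Polynomial.coeff_zero_eq_eval_zero, Polynomial.eval_prod]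
    simp
  have hNx := newton Finset.univ x
  have hNy := newton Finset.univ y
  rw [← hP] at hNx
  rw [← hQ] at hNy
  -- the key invariant
  set u : ℕ → ℝ := fun n => ∑ j ∈ range (n+1), P.coeff j * a (n - j) with hu
  have key : ∀ k : ℕ, k ≤ K + 1 → u k = Q.coeff k := by
    intro k
    induction k using Nat.strong_induction_on with
    | _ k ih =>
      intro hk
      rcases Nat.eq_zero_or_pos k with h0 | hpos
      · subst h0
        simp [hu, hP0, hQ0, ha0]
      · have hkk : ((k:ℕ):ℝ) ≠ 0 := Nat.cast_ne_zero.mpr (by omega)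
        refine mul_left_cancel₀ hkk ?_
        have stepA : (k:ℝ) * u k
            = (∑ j ∈ range (k+1), ((j:ℝ) * P.coeff j) * a (k-j))
              + ∑ j ∈ range (k+1), P.coeff j * (((k-j : ℕ):ℝ) * a (k-j)) := by
          rw [hu]
          simp only
          rw [Finset.mul_sum, ← Finset.sum_add_distrib]
          apply Finset.sum_congr rfl
          intro j hj
          simp only [Finset.mem_range] at hj
          have hjk : j ≤ k := by omega
          have hcast : ((k - j:ℕ):ℝ) = (k:ℝ) - (j:ℝ) := by
            push_cast [hjk]; ring
          rw [hcast]; ring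
        -- S1
        have hS1 : ∑ j ∈ range (k+1), ((j:ℝ) * P.coeff j) * a (k-j)
            = -∑ i ∈ range k, (∑ t, x t ^ (i+1)) * u (k-1-i) := by
          have e1 : ∀ j ∈ range (k+1), ((j:ℝ) * P.coeff j) * a (k-j)
              = -∑ i ∈ range j, ((∑ t, x t ^ (i+1)) * P.coeff (j-1-i) * a (k-j)) := by
            intro j hj
            rw [hNx j, neg_mul, Finset.sum_mul]
          rw [Finset.sum_congr rfl e1, Finset.sum_neg_distrib,
            tri_swap k (fun i j => (∑ t, x t ^ (i+1)) * P.coeff (j-1-i) * a (k-j))]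
          congr 1
          apply Finset.sum_congr rfl
          intro i hi
          simp only [Finset.mem_range] at hi
          rw [hu]
          simp only
          rw [Finset.mul_sum]
          rw [show k - i = (k-1-i)+1 by omega]
          apply Finset.sum_congr rfl
          intro t ht
          simp only [Finset.mem_range] at ht
          rw [show i+1+t-1-i = t by omega, show k-(i+1+t) = k-1-i-t by omega]
          ring
        -- S2
        have hS2 : ∑ j ∈ range (k+1), P.coeff j * (((k-j : ℕ):ℝ) * a (k-j))
            = ∑ t ∈ range k, m (t+1) * u (k-1-t) := by
          have e1 : ∀ j ∈ range (k+1), P.coeff j * (((k-j:ℕ):ℝ) * a (k-j))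
              = ∑ t ∈ range (k-j), P.coeff j * (m (t+1) * a (k-1-j-t)) := by
            intro j hj
            simp only [Finset.mem_range] at hj
            rcases Nat.eq_or_lt_of_le (Nat.lt_succ_iff.mp hj) with hjk | hjk
            · subst hjk
              simp
            · have h1 : 1 ≤ k - j := by omega
              have h2 : k - j ≤ K + 1 := by omega
              rw [harec (k-j) h1 h2]
              rw [show Icc 1 (k-j) = Ico 1 (k-j+1) from (Finset.Ico_add_one_right_eq_Icc 1 (k-j)).symm]
              rw [Finset.sum_Ico_eq_sum_range]
              simp only [Nat.add_sub_cancel]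
              rw [Finset.mul_sum]
              apply Finset.sum_congr rfl
              intro t ht
              rw [show k - j - (1 + t) = k - 1 - j - t by omega, Nat.add_comm 1 t]
          rw [Finset.sum_congr rfl e1, Finset.sum_range_succ]
          rw [Nat.sub_self, Finset.range_zero, Finset.sum_empty, add_zero]
          rw [tri_symm k (fun j t => P.coeff j * (m (t+1) * a (k-1-j-t)))]
          apply Finset.sum_congr rfl
          intro t ht
          simp only [Finset.mem_range] at ht
          rw [hu]
          simp only
          rw [Finset.mul_sum]
          rw [show k - t = (k-1-t)+1 by omega]
          apply Finset.sum_congr rfl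
          intro j hj
          rw [show k-1-j-t = k-1-t-j by omega]
          ring
        rw [stepA, hS1, hS2]
        have combine : ∀ i ∈ range k,
            m (i+1) * u (k-1-i) - (∑ t, x t ^ (i+1)) * u (k-1-i)
            = -((∑ t, y t ^ (i+1)) * Q.coeff (k-1-i)) := by
          intro i hi
          simp only [Finset.mem_range] at hi
          rw [hm (i+1) (by omega) (by omega), ih (k-1-i) (by omega) (by omega)]
          ring
        have step2 : -(∑ i ∈ range k, (∑ t, x t ^ (i+1)) * u (k-1-i))
              + ∑ t ∈ range k, m (t+1) * u (k-1-t)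
            = ∑ i ∈ range k,
                (m (i+1) * u (k-1-i) - (∑ t, x t ^ (i+1)) * u (k-1-i)) := by
          rw [Finset.sum_sub_distrib]
          ring
        rw [step2, Finset.sum_congr rfl combine, Finset.sum_neg_distrib]
        exact (hNy k).symm
  -- now conclude
  have hu0 : u (K+1) = 0 := by
    rw [key (K+1) le_rfl]
    exact Polynomial.coeff_eq_zero_of_natDegree_lt (lt_of_le_of_lt hQnd (by omega))
  have hexp : u (K+1) = a (K+1) + ∑ j ∈ Icc 1 nx, c j * a (K+1-j) := by
    rw [hu]
    simp only
    rw [Finset.sum_range_succ']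
    rw [hP0, Nat.sub_zero, one_mul, add_comm]
    congr 1
    have hsub : range nx ⊆ range (K+1) := by
      apply Finset.range_subset_range.mpr
      omega
    rw [← Finset.sum_subset hsub (by
      intro j hj hjn
      simp only [Finset.mem_range] at hj hjn
      have : P.coeff (j+1) = 0 :=
        Polynomial.coeff_eq_zero_of_natDegree_lt (lt_of_le_of_lt hPnd (by omega))
      rw [this, zero_mul])]
    rw [show Icc 1 nx = Ico 1 (nx+1) from (Finset.Ico_add_one_right_eq_Icc 1 nx).symm]
    rw [Finset.sum_Ico_eq_sum_range]
    simp only [Nat.add_sub_cancel]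
    apply Finset.sum_congr rfl
    intro j hj
    rw [hc (1+j)]
    rw [show 1 + j = j + 1 by omega, show K + 1 - (j+1) = K - j by omega]
  have part1 : a (K+1) = -∑ j ∈ Icc 1 nx, c j * a (K+1-j) := by
    rw [hexp] at hu0
    linarith
  refine ⟨part1, ?_⟩
  have hr := harec (K+1) (by omega) le_rfl
  rw [Finset.sum_Icc_succ_top (by omega : 1 ≤ K + 1)] at hr
  rw [Nat.sub_self, ha0, mul_one, part1] at hr
  push_cast at hr
  linarith
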